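/- Let p_{ijk} (i,j,k ∈ {1,2}) be nonnegative reals satisfying the nine supermodularity inequalities (p_{111}p_{222} ≥ p_{112}p_{221}, p_{111}p_{222} ≥ p_{121}p_{212}, p_{111}p_{222} ≥ p_{211}p_{122}, p_{112}p_{222} ≥ p_{122}p_{212}, p_{121}p_{222} ≥ p_{122}p_{221}, p_{211}p_{222} ≥ p_{212}p_{221}, p_{111}p_{122} ≥ p_{112}p_{121}, p_{111}p_{212} ≥ p_{112}p_{211}, p_{111}p_{221} ≥ p_{121}p_{211}). Define U_{12} = (p_{111}+p_{112})(p_{221}+p_{222}) − (p_{121}+p_{122})(p_{211}+p_{212}), U_{12}^1 = p_{111}p_{221} − p_{121}p_{211}, U_{12}^2 = p_{112}p_{222} − p_{122}p_{212}. Then U_{12} ≥ 0, and if U_{12} = 0 then U_{12}^1 = 0 and U_{12}^2 = 0. -/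
import Mathlib


/-- under the nine supermodularity inequalities,
U12 ≥ 0, and U12 = 0 forces U12^1 = U12^2 = 0. -/
theorem stmt_5
    (p111 p112 p121 p122 p211 p212 p221 p222 : ℝ)
    (hnn : 0 ≤ p111 ∧ 0 ≤ p112 ∧ 0 ≤ p121 ∧ 0 ≤ p122 ∧
           0 ≤ p211 ∧ 0 ≤ p212 ∧ 0 ≤ p221 ∧ 0 ≤ p222)
    (h1 : p111 * p222 ≥ p112 * p221)
    (h2 : p111 * p222 ≥ p121 * p212)
    (h3 : p111 * p222 ≥ p211 * p122)
    (h4 : p112 * p222 ≥ p122 * p212)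
    (h5 : p121 * p222 ≥ p122 * p221)
    (h6 : p211 * p222 ≥ p212 * p221)
    (h7 : p111 * p122 ≥ p112 * p121)
    (h8 : p111 * p212 ≥ p112 * p211)
    (h9 : p111 * p221 ≥ p121 * p211) :
    (p111 + p112) * (p221 + p222) - (p121 + p122) * (p211 + p212) ≥ 0 ∧
    ((p111 + p112) * (p221 + p222) - (p121 + p122) * (p211 + p212) = 0 →
      p111 * p221 - p121 * p211 = 0 ∧ p112 * p222 - p122 * p212 = 0) := by
  obtain ⟨n1, n2, n3, n4, n5, n6, n7, n8⟩ := hnn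
  have hU1 : p111 * p221 - p121 * p211 ≥ 0 := by linarith
  have hU2 : p112 * p222 - p122 * p212 ≥ 0 := by linarith
  -- key: ab ≤ AD
  have hab : (p121 * p212) * (p122 * p211) ≤ (p111 * p222) * (p112 * p221) := by
    nlinarith [mul_le_mul h9 h4 (mul_nonneg n4 n6) (mul_nonneg n1 n7)]
  have hE : p111 * p222 + p112 * p221 - p121 * p212 - p122 * p211 ≥ 0 := by
    rcases eq_or_lt_of_le (mul_nonneg n1 n8) with hA | hA
    · have ha : p121 * p212 = 0 := le_antisymm (by linarith) (mul_nonneg n3 n6)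
      have hb : p122 * p211 = 0 := by
        have := mul_nonneg n4 n5
        nlinarith
      nlinarith [mul_nonneg n2 n7]
    · have hb : p122 * p211 ≤ p111 * p222 := by linarith
      have hprod : (p111 * p222 - p121 * p212) * (p111 * p222 - p122 * p211) ≥ 0 :=
        mul_nonneg (sub_nonneg.2 h2) (sub_nonneg.2 hb)
      have hAE : (p111 * p222) *
          (p111 * p222 + p112 * p221 - p121 * p212 - p122 * p211) ≥ 0 := by nlinarith
      exact (mul_nonneg_iff_of_pos_left hA).1 hAE
  constructor
  · nlinarith
  · intro h0
    constructor <;> nlinarith
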